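/- Let a_1 > a_2 > a_3 be integers such that a_1 and a_3 have the same number of factors of 2 in their prime factorizations, let t_1, t_2, t_3 be nonnegative integers, and let S = K^{(a_1)}_{a_1+t_1} ∪ K^{(a_2)}_{a_2+t_2} ∪ K^{(a_3)}_{a_3+t_3} be a vertex disjoint union of cliques. Then any 2-coloring of ℤ with no monochromatic translate of any set in W'(S) is periodic with period 2a_2. -/

import Mathlib

/-- An automorphism of the hypercube `Q_d`: a bijection of the vertex set preserving
adjacency (symmetric difference of size one) in both directions. -/
def IsCubeAutomorphism {d : ℕ} (ψ : Finset (Fin d) → Finset (Fin d)) : Prop :=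
  Function.Bijective ψ ∧
    ∀ A B : Finset (Fin d), (symmDiff A B).card = 1 ↔ (symmDiff (ψ A) (ψ B)).card = 1

/-- `W_d(S) = {|A| : A ∈ S}`, the set of weights (as integers) of members of `S`. -/
def weightSet {d : ℕ} (S : Set (Finset (Fin d))) : Set ℤ :=
  {w | ∃ A ∈ S, (A.card : ℤ) = w}

/-- `W*(S) = {W_d(ψ(S)) : ψ an automorphism of Q_d}`. -/
def WStar {d : ℕ} (S : Set (Finset (Fin d))) : Set (Set ℤ) :=
  {W | ∃ ψ, IsCubeAutomorphism ψ ∧ W = weightSet (ψ '' S)}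

/-- `D` is a translate of `W`. -/
def IsTranslateOf (D W : Set ℤ) : Prop := ∃ j : ℤ, D = (fun x => x + j) '' W

/-- The translates of sets from `𝒲` whose smallest element is `0`. -/
def MinZeroTranslates (𝒲 : Set (Set ℤ)) : Set (Set ℤ) :=
  {D | (∃ W ∈ 𝒲, IsTranslateOf D W) ∧ 0 ∈ D ∧ ∀ x ∈ D, 0 ≤ x}

/-- `W'(S)`: translates of sets from `W*(S)` with smallest element `0` which are
minimal with respect to inclusion. -/
def WPrime {d : ℕ} (S : Set (Finset (Fin d))) : Set (Set ℤ) :=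
  {D | D ∈ MinZeroTranslates (WStar S) ∧
    ∀ D' ∈ MinZeroTranslates (WStar S), D' ⊆ D → D' = D}

/-- A family `𝒟` of sets of integers is `t`-translate-Ramsey: every `t`-coloring of `ℤ`
admits a monochromatic translate `D + j` of some `D ∈ 𝒟`. -/
def TranslateRamseySet (t : ℕ) (𝒟 : Set (Set ℤ)) : Prop :=
  ∀ c : ℤ → Fin t, ∃ D ∈ 𝒟, ∃ j : ℤ, ∀ x ∈ D, ∀ y ∈ D, c (x + j) = c (y + j)

/-- Lemma 16 (3cliques4:lem): let `a1 > a2 > a3` be integers such that `a1` and `a3`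
have the same number of factors of `2` in their prime factorizations (i.e.
`a1 = p·2^r`, `a3 = q·2^r` with `p, q` odd), let `t1, t2, t3 ≥ 0`, and let
`S = K^{(a1)} ∪ K^{(a2)} ∪ K^{(a3)}` be a vertex disjoint union of cliques. Then any
`2`-coloring of `ℤ` with no monochromatic translate of any set in `W'(S)` is periodic
with period `2·a2`. -/

private lemma fin2_pairs (x1 y1 x2 y2 x3 y3 : Fin 2)
    (h1 : ¬(x1 = x2 ∧ x2 = x3)) (h2 : ¬(x1 = x2 ∧ x2 = y3))
    (h3 : ¬(x1 = y2 ∧ y2 = x3)) (h4 : ¬(x1 = y2 ∧ y2 = y3))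
    (h5 : ¬(y1 = x2 ∧ x2 = x3)) (h6 : ¬(y1 = x2 ∧ x2 = y3))
    (h7 : ¬(y1 = y2 ∧ y2 = x3)) (h8 : ¬(y1 = y2 ∧ y2 = y3)) :
    (x1 = y1 ∧ x2 = y2 ∧ x1 ≠ x2) ∨ (x1 = y1 ∧ x3 = y3 ∧ x1 ≠ x3) ∨
      (x2 = y2 ∧ x3 = y3 ∧ x2 ≠ x3) := by
  revert h1 h2 h3 h4 h5 h6 h7 h8
  fin_cases x1 <;> fin_cases y1 <;> fin_cases x2 <;> fin_cases y2 <;>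
    fin_cases x3 <;> fin_cases y3 <;> decide

private lemma fin2_third {a b t : Fin 2} (h1 : a ≠ t) (h2 : b ≠ t) : a = b := by
  revert h1 h2; fin_cases a <;> fin_cases b <;> fin_cases t <;> decide

private lemma fin2_toggle {a b t : Fin 2} (h : a ≠ b) : (a = t ↔ ¬ (b = t)) := by
  revert h; fin_cases a <;> fin_cases b <;> fin_cases t <;> decide

/-- The pair condition `C(z)`: among the three symmetric pairs at center `z`,
two are monochromatic with opposite colors. -/
private def PairCond (A1 A2 A3 : ℤ) (c : ℤ → Fin 2) : Prop :=
  ∀ z : ℤ,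
    (c (z + A1) = c (z + -A1) ∧ c (z + A2) = c (z + -A2) ∧ c (z + A1) ≠ c (z + A2)) ∨
    (c (z + A1) = c (z + -A1) ∧ c (z + A3) = c (z + -A3) ∧ c (z + A1) ≠ c (z + A3)) ∨
    (c (z + A2) = c (z + -A2) ∧ c (z + A3) = c (z + -A3) ∧ c (z + A2) ≠ c (z + A3))

private lemma claim1 {A1 A2 A3 : ℤ} {c : ℤ → Fin 2} (hC : PairCond A1 A2 A3 c)
    {x : ℤ} (hB : c (x + A2) ≠ c (x + -A2)) :
    c (x + A1) = c (x + -A1) ∧ c (x + A3) = c (x + -A3) ∧ c (x + A1) ≠ c (x + A3) := by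
  rcases hC x with ⟨_, h2, _⟩ | h | ⟨h2, _, _⟩
  · exact absurd h2 hB
  · exact h
  · exact absurd h2 hB

/-- Propagation of the bad set by the step `A1 - A3`. -/
private lemma prop_step1 {A1 A2 A3 : ℤ} {c : ℤ → Fin 2} (hC : PairCond A1 A2 A3 c)
    {x : ℤ} (hB : c (x + A2) ≠ c (x + -A2)) :
    c (x + (A1 - A3) + A2) ≠ c (x + (A1 - A3) + -A2) := by
  obtain ⟨h11, h33, h13⟩ := claim1 hC hB
  intro hcon
  by_cases hP : c (x + A2) = c (x + A1)
  · -- step 1 at center x + A1 + A2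
    have hz2 := hC (x + A1 + A2)
    rw [show x + A1 + A2 + -A1 = x + A2 by ring, show x + A1 + A2 + -A2 = x + A1 by ring,
      show x + A1 + A2 + -A3 = x + (A1 - A3) + A2 by ring] at hz2
    have hw1 : c (x + (A1 - A3) + A2) ≠ c (x + A1) := by
      rcases hz2 with ⟨e1, e2, ne⟩ | ⟨e1, e3, ne⟩ | ⟨e2, e3, ne⟩
      · exact absurd (e1.trans (hP.trans e2.symm)) ne
      · intro h
        exact ne ((e1.trans hP).trans (e3.trans h).symm)
      · intro h
        exact ne (e2.trans (e3.trans h).symm)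
    have hw2 : c (x + (A1 - A3) + -A2) ≠ c (x + A1) := fun h => hw1 (hcon.trans h)
    -- step 2 at center x + -A2 + -A3
    have hz4 := hC (x + -A2 + -A3)
    rw [show x + -A2 + -A3 + A1 = x + (A1 - A3) + -A2 by ring,
      show x + -A2 + -A3 + A2 = x + -A3 by ring,
      show x + -A2 + -A3 + A3 = x + -A2 by ring] at hz4
    have f2 : c (x + -A3) ≠ c (x + A1) := fun h => h13 (h33.trans h).symm
    have f3 : c (x + -A2) ≠ c (x + A1) := fun h => hB (hP.trans h.symm)
    rcases hz4 with ⟨e1, e2, ne⟩ | ⟨e1, e3, ne⟩ | ⟨e2, e3, ne⟩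
    · exact ne (fin2_third hw2 f2)
    · exact ne (fin2_third hw2 f3)
    · exact ne (fin2_third f2 f3)
  · -- P = 0 case
    have hm : c (x + -A2) = c (x + A1) := fin2_third (Ne.symm hB) (fun h => hP h.symm)
    -- step 1 at center x + A1 + -A2
    have hz1 := hC (x + A1 + -A2)
    rw [show x + A1 + -A2 + -A1 = x + -A2 by ring, show x + A1 + -A2 + A2 = x + A1 by ring,
      show x + A1 + -A2 + -A3 = x + (A1 - A3) + -A2 by ring] at hz1
    have hw : c (x + (A1 - A3) + -A2) ≠ c (x + A1) := by
      rcases hz1 with ⟨e1, e2, ne⟩ | ⟨e1, e3, ne⟩ | ⟨e2, e3, ne⟩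
      · exact absurd (e1.trans hm) ne
      · intro h
        exact ne ((e1.trans hm).trans (e3.trans h).symm)
      · intro h
        exact ne (e3.trans h).symm
    have hw' : c (x + (A1 - A3) + A2) ≠ c (x + A1) := fun h => hw (hcon.symm.trans h)
    -- step 2 at center x + A2 + -A3
    have hz3 := hC (x + A2 + -A3)
    rw [show x + A2 + -A3 + A1 = x + (A1 - A3) + A2 by ring,
      show x + A2 + -A3 + -A2 = x + -A3 by ring,
      show x + A2 + -A3 + A3 = x + A2 by ring] at hz3
    have f2 : c (x + -A3) ≠ c (x + A1) := fun h => h13 (h33.trans h).symm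
    rcases hz3 with ⟨e1, e2, ne⟩ | ⟨e1, e3, ne⟩ | ⟨e2, e3, ne⟩
    · exact ne ((fin2_third hw' f2).trans e2.symm)
    · exact ne (fin2_third hw' hP)
    · exact ne (e2.trans (fin2_third f2 hP))

/-- Propagation of the bad set by the step `A1 + A3`. -/
private lemma prop_step2 {A1 A2 A3 : ℤ} {c : ℤ → Fin 2} (hC : PairCond A1 A2 A3 c)
    {x : ℤ} (hB : c (x + A2) ≠ c (x + -A2)) :
    c (x + (A1 + A3) + A2) ≠ c (x + (A1 + A3) + -A2) := by
  obtain ⟨h11, h33, h13⟩ := claim1 hC hB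
  intro hcon
  by_cases hP : c (x + A2) = c (x + A1)
  · have hz2 := hC (x + A1 + A2)
    rw [show x + A1 + A2 + -A1 = x + A2 by ring, show x + A1 + A2 + -A2 = x + A1 by ring,
      show x + A1 + A2 + A3 = x + (A1 + A3) + A2 by ring] at hz2
    have hw1 : c (x + (A1 + A3) + A2) ≠ c (x + A1) := by
      rcases hz2 with ⟨e1, e2, ne⟩ | ⟨e1, e3, ne⟩ | ⟨e2, e3, ne⟩
      · exact absurd (e1.trans (hP.trans e2.symm)) ne
      · intro h
        exact ne ((e1.trans hP).trans h.symm)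
      · intro h
        exact ne (e2.trans h.symm)
    have hw2 : c (x + (A1 + A3) + -A2) ≠ c (x + A1) := fun h => hw1 (hcon.trans h)
    have hz4 := hC (x + A3 + -A2)
    rw [show x + A3 + -A2 + A1 = x + (A1 + A3) + -A2 by ring,
      show x + A3 + -A2 + A2 = x + A3 by ring,
      show x + A3 + -A2 + -A3 = x + -A2 by ring] at hz4
    have f2 : c (x + A3) ≠ c (x + A1) := Ne.symm h13
    have f3 : c (x + -A2) ≠ c (x + A1) := fun h => hB (hP.trans h.symm)
    rcases hz4 with ⟨e1, e2, ne⟩ | ⟨e1, e3, ne⟩ | ⟨e2, e3, ne⟩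
    · exact ne (fin2_third hw2 f2)
    · exact ne ((fin2_third hw2 f3).trans e3.symm)
    · exact ne ((fin2_third f2 f3).trans e3.symm)
  · have hm : c (x + -A2) = c (x + A1) := fin2_third (Ne.symm hB) (fun h => hP h.symm)
    have hz1 := hC (x + A1 + -A2)
    rw [show x + A1 + -A2 + -A1 = x + -A2 by ring, show x + A1 + -A2 + A2 = x + A1 by ring,
      show x + A1 + -A2 + A3 = x + (A1 + A3) + -A2 by ring] at hz1
    have hw : c (x + (A1 + A3) + -A2) ≠ c (x + A1) := by
      rcases hz1 with ⟨e1, e2, ne⟩ | ⟨e1, e3, ne⟩ | ⟨e2, e3, ne⟩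
      · exact absurd (e1.trans hm) ne
      · intro h
        exact ne ((e1.trans hm).trans h.symm)
      · intro h
        exact ne h.symm
    have hw' : c (x + (A1 + A3) + A2) ≠ c (x + A1) := fun h => hw (hcon.symm.trans h)
    have hz3 := hC (x + A2 + A3)
    rw [show x + A2 + A3 + A1 = x + (A1 + A3) + A2 by ring,
      show x + A2 + A3 + -A2 = x + A3 by ring,
      show x + A2 + A3 + -A3 = x + A2 by ring] at hz3
    have g2 : c (x + A3) ≠ c (x + A1) := Ne.symm h13
    rcases hz3 with ⟨e1, e2, ne⟩ | ⟨e1, e3, ne⟩ | ⟨e2, e3, ne⟩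
    · exact ne ((fin2_third hw' g2).trans e2.symm)
    · exact ne ((fin2_third hw' hP).trans e3.symm)
    · exact ne (e2.trans ((fin2_third g2 hP).trans e3.symm))

private lemma int_even_add_one {n : ℤ} : Even (n + 1) ↔ ¬ Even n := by
  rw [Int.even_iff, Int.even_iff]; omega

private lemma pairCond_neg {A1 A2 A3 : ℤ} {c : ℤ → Fin 2} (hC : PairCond A1 A2 A3 c) :
    PairCond A1 A2 A3 (fun y => c (-y)) := by
  intro z
  have h := hC (-z)
  dsimp only
  rw [show -(z + A1) = -z + -A1 by ring, show -(z + -A1) = -z + A1 by ring,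
    show -(z + A2) = -z + -A2 by ring, show -(z + -A2) = -z + A2 by ring,
    show -(z + A3) = -z + -A3 by ring, show -(z + -A3) = -z + A3 by ring]
  rcases h with ⟨e1, e2, ne⟩ | ⟨e1, e2, ne⟩ | ⟨e1, e2, ne⟩
  · exact Or.inl ⟨e1.symm, e2.symm, fun hx => ne ((e1.trans hx).trans e2.symm)⟩
  · exact Or.inr (Or.inl ⟨e1.symm, e2.symm, fun hx => ne ((e1.trans hx).trans e2.symm)⟩)
  · exact Or.inr (Or.inr ⟨e1.symm, e2.symm, fun hx => ne ((e1.trans hx).trans e2.symm)⟩)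

private lemma core_periodic (A1 A2 A3 p q e : ℤ) (hp : Odd p) (hq : Odd q)
    (hA1 : A1 = p * e) (hA3 : A3 = q * e) (c : ℤ → Fin 2)
    (hC : PairCond A1 A2 A3 c) :
    ∀ x : ℤ, c (x + 2 * A2) = c x := by
  have hC' : PairCond A1 A2 A3 (fun y => c (-y)) := pairCond_neg hC
  -- negative-direction propagation
  have step1m : ∀ y : ℤ, c (y + A2) ≠ c (y + -A2) →
      c (y - (A1 - A3) + A2) ≠ c (y - (A1 - A3) + -A2) := by
    intro y h
    have hpre : (fun t => c (-t)) (-y + A2) ≠ (fun t => c (-t)) (-y + -A2) := by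
      dsimp only
      rw [show -(-y + A2) = y + -A2 by ring, show -(-y + -A2) = y + A2 by ring]
      exact h.symm
    have h' := prop_step1 hC' hpre
    rw [show -(-y + (A1 - A3) + A2) = y - (A1 - A3) + -A2 by ring,
      show -(-y + (A1 - A3) + -A2) = y - (A1 - A3) + A2 by ring] at h'
    exact h'.symm
  have step2m : ∀ y : ℤ, c (y + A2) ≠ c (y + -A2) →
      c (y - (A1 + A3) + A2) ≠ c (y - (A1 + A3) + -A2) := by
    intro y h
    have hpre : (fun t => c (-t)) (-y + A2) ≠ (fun t => c (-t)) (-y + -A2) := by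
      dsimp only
      rw [show -(-y + A2) = y + -A2 by ring, show -(-y + -A2) = y + A2 by ring]
      exact h.symm
    have h' := prop_step2 hC' hpre
    rw [show -(-y + (A1 + A3) + A2) = y - (A1 + A3) + -A2 by ring,
      show -(-y + (A1 + A3) + -A2) = y - (A1 + A3) + A2 by ring] at h'
    exact h'.symm
  -- flips
  have flip1p : ∀ y : ℤ, c (y + (A1 - A3) + A2) ≠ c (y + (A1 - A3) + -A2) →
      c (y + (A1 - A3) + A1) ≠ c (y + A1) := by
    intro y h2
    have h13' := (claim1 hC h2).2.2
    rw [show y + (A1 - A3) + A3 = y + A1 by ring] at h13'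
    exact h13'
  have flip2p : ∀ y : ℤ, c (y + (A1 + A3) + A2) ≠ c (y + (A1 + A3) + -A2) →
      c (y + (A1 + A3) + A1) ≠ c (y + A1) := by
    intro y h2
    obtain ⟨_, h33', h13'⟩ := claim1 hC h2
    rw [show y + (A1 + A3) + -A3 = y + A1 by ring] at h33'
    exact fun h => h13' (h.trans h33'.symm)
  have flip1m : ∀ y : ℤ, c (y + A2) ≠ c (y + -A2) →
      c (y - (A1 - A3) + A1) ≠ c (y + A1) := by
    intro y h
    have h' := flip1p (y - (A1 - A3)) (by
      rw [show y - (A1 - A3) + (A1 - A3) + A2 = y + A2 by ring,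
        show y - (A1 - A3) + (A1 - A3) + -A2 = y + -A2 by ring]
      exact h)
    rw [show y - (A1 - A3) + (A1 - A3) + A1 = y + A1 by ring] at h'
    exact h'.symm
  have flip2m : ∀ y : ℤ, c (y + A2) ≠ c (y + -A2) →
      c (y - (A1 + A3) + A1) ≠ c (y + A1) := by
    intro y h
    have h' := flip2p (y - (A1 + A3)) (by
      rw [show y - (A1 + A3) + (A1 + A3) + A2 = y + A2 by ring,
        show y - (A1 + A3) + (A1 + A3) + -A2 = y + -A2 by ring]
      exact h)
    rw [show y - (A1 + A3) + (A1 + A3) + A1 = y + A1 by ring] at h'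
    exact h'.symm
  -- main reduction
  suffices noB : ∀ y : ℤ, c (y + A2) = c (y + -A2) by
    intro x
    have h := noB (x + A2)
    rw [show x + A2 + A2 = x + 2 * A2 by ring, show x + A2 + -A2 = x by ring] at h
    exact h
  intro x0
  by_contra hB0
  obtain ⟨a, ha⟩ := hp
  obtain ⟨b, hb⟩ := hq
  have key : ∀ k l : ℤ,
      (c (x0 + k * (A1 + A3) + l * (A1 - A3) + A2) ≠
        c (x0 + k * (A1 + A3) + l * (A1 - A3) + -A2)) ∧
      (c (x0 + k * (A1 + A3) + l * (A1 - A3) + A1) = c (x0 + A1) ↔ Even (k + l)) := by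
    have stepl : ∀ k l : ℤ,
        ((c (x0 + k * (A1 + A3) + l * (A1 - A3) + A2) ≠
          c (x0 + k * (A1 + A3) + l * (A1 - A3) + -A2)) ∧
         (c (x0 + k * (A1 + A3) + l * (A1 - A3) + A1) = c (x0 + A1) ↔ Even (k + l))) →
        ((c (x0 + k * (A1 + A3) + (l + 1) * (A1 - A3) + A2) ≠
          c (x0 + k * (A1 + A3) + (l + 1) * (A1 - A3) + -A2)) ∧
         (c (x0 + k * (A1 + A3) + (l + 1) * (A1 - A3) + A1) = c (x0 + A1) ↔
            Even (k + (l + 1)))) := by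
      intro k l ⟨ihB, ihE⟩
      have hBnew := prop_step1 hC ihB
      have hflip := flip1p _ hBnew
      rw [show x0 + k * (A1 + A3) + l * (A1 - A3) + (A1 - A3) + A2 =
            x0 + k * (A1 + A3) + (l + 1) * (A1 - A3) + A2 by ring,
        show x0 + k * (A1 + A3) + l * (A1 - A3) + (A1 - A3) + -A2 =
            x0 + k * (A1 + A3) + (l + 1) * (A1 - A3) + -A2 by ring] at hBnew
      rw [show x0 + k * (A1 + A3) + l * (A1 - A3) + (A1 - A3) + A1 =
            x0 + k * (A1 + A3) + (l + 1) * (A1 - A3) + A1 by ring] at hflip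
      refine ⟨hBnew, ?_⟩
      rw [show k + (l + 1) = (k + l) + 1 by ring, int_even_add_one]
      exact (fin2_toggle hflip).trans (not_congr ihE)
    have stepl' : ∀ k l : ℤ,
        ((c (x0 + k * (A1 + A3) + l * (A1 - A3) + A2) ≠
          c (x0 + k * (A1 + A3) + l * (A1 - A3) + -A2)) ∧
         (c (x0 + k * (A1 + A3) + l * (A1 - A3) + A1) = c (x0 + A1) ↔ Even (k + l))) →
        ((c (x0 + k * (A1 + A3) + (l - 1) * (A1 - A3) + A2) ≠
          c (x0 + k * (A1 + A3) + (l - 1) * (A1 - A3) + -A2)) ∧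
         (c (x0 + k * (A1 + A3) + (l - 1) * (A1 - A3) + A1) = c (x0 + A1) ↔
            Even (k + (l - 1)))) := by
      intro k l ⟨ihB, ihE⟩
      have hBnew := step1m _ ihB
      have hflip := flip1m _ ihB
      rw [show x0 + k * (A1 + A3) + l * (A1 - A3) - (A1 - A3) + A2 =
            x0 + k * (A1 + A3) + (l - 1) * (A1 - A3) + A2 by ring,
        show x0 + k * (A1 + A3) + l * (A1 - A3) - (A1 - A3) + -A2 =
            x0 + k * (A1 + A3) + (l - 1) * (A1 - A3) + -A2 by ring] at hBnew
      rw [show x0 + k * (A1 + A3) + l * (A1 - A3) - (A1 - A3) + A1 =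
            x0 + k * (A1 + A3) + (l - 1) * (A1 - A3) + A1 by ring] at hflip
      refine ⟨hBnew, ?_⟩
      have heven : Even (k + (l - 1)) ↔ ¬ Even (k + l) := by
        rw [Int.even_iff, Int.even_iff]; omega
      rw [heven]
      exact (fin2_toggle hflip).trans (not_congr ihE)
    have stepk : ∀ k l : ℤ,
        ((c (x0 + k * (A1 + A3) + l * (A1 - A3) + A2) ≠
          c (x0 + k * (A1 + A3) + l * (A1 - A3) + -A2)) ∧
         (c (x0 + k * (A1 + A3) + l * (A1 - A3) + A1) = c (x0 + A1) ↔ Even (k + l))) →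
        ((c (x0 + (k + 1) * (A1 + A3) + l * (A1 - A3) + A2) ≠
          c (x0 + (k + 1) * (A1 + A3) + l * (A1 - A3) + -A2)) ∧
         (c (x0 + (k + 1) * (A1 + A3) + l * (A1 - A3) + A1) = c (x0 + A1) ↔
            Even ((k + 1) + l))) := by
      intro k l ⟨ihB, ihE⟩
      have hBnew := prop_step2 hC ihB
      have hflip := flip2p _ hBnew
      rw [show x0 + k * (A1 + A3) + l * (A1 - A3) + (A1 + A3) + A2 =
            x0 + (k + 1) * (A1 + A3) + l * (A1 - A3) + A2 by ring,
        show x0 + k * (A1 + A3) + l * (A1 - A3) + (A1 + A3) + -A2 =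
            x0 + (k + 1) * (A1 + A3) + l * (A1 - A3) + -A2 by ring] at hBnew
      rw [show x0 + k * (A1 + A3) + l * (A1 - A3) + (A1 + A3) + A1 =
            x0 + (k + 1) * (A1 + A3) + l * (A1 - A3) + A1 by ring] at hflip
      refine ⟨hBnew, ?_⟩
      have heven : Even ((k + 1) + l) ↔ ¬ Even (k + l) := by
        rw [Int.even_iff, Int.even_iff]; omega
      rw [heven]
      exact (fin2_toggle hflip).trans (not_congr ihE)
    have stepk' : ∀ k l : ℤ,
        ((c (x0 + k * (A1 + A3) + l * (A1 - A3) + A2) ≠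
          c (x0 + k * (A1 + A3) + l * (A1 - A3) + -A2)) ∧
         (c (x0 + k * (A1 + A3) + l * (A1 - A3) + A1) = c (x0 + A1) ↔ Even (k + l))) →
        ((c (x0 + (k - 1) * (A1 + A3) + l * (A1 - A3) + A2) ≠
          c (x0 + (k - 1) * (A1 + A3) + l * (A1 - A3) + -A2)) ∧
         (c (x0 + (k - 1) * (A1 + A3) + l * (A1 - A3) + A1) = c (x0 + A1) ↔
            Even ((k - 1) + l))) := by
      intro k l ⟨ihB, ihE⟩
      have hBnew := step2m _ ihB
      have hflip := flip2m _ ihB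
      rw [show x0 + k * (A1 + A3) + l * (A1 - A3) - (A1 + A3) + A2 =
            x0 + (k - 1) * (A1 + A3) + l * (A1 - A3) + A2 by ring,
        show x0 + k * (A1 + A3) + l * (A1 - A3) - (A1 + A3) + -A2 =
            x0 + (k - 1) * (A1 + A3) + l * (A1 - A3) + -A2 by ring] at hBnew
      rw [show x0 + k * (A1 + A3) + l * (A1 - A3) - (A1 + A3) + A1 =
            x0 + (k - 1) * (A1 + A3) + l * (A1 - A3) + A1 by ring] at hflip
      refine ⟨hBnew, ?_⟩
      have heven : Even ((k - 1) + l) ↔ ¬ Even (k + l) := by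
        rw [Int.even_iff, Int.even_iff]; omega
      rw [heven]
      exact (fin2_toggle hflip).trans (not_congr ihE)
    have base : (c (x0 + (0 : ℤ) * (A1 + A3) + (0 : ℤ) * (A1 - A3) + A2) ≠
          c (x0 + (0 : ℤ) * (A1 + A3) + (0 : ℤ) * (A1 - A3) + -A2)) ∧
        (c (x0 + (0 : ℤ) * (A1 + A3) + (0 : ℤ) * (A1 - A3) + A1) = c (x0 + A1) ↔
          Even ((0 : ℤ) + 0)) := by
      constructor
      · rw [show x0 + (0 : ℤ) * (A1 + A3) + (0 : ℤ) * (A1 - A3) + A2 = x0 + A2 by ring,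
          show x0 + (0 : ℤ) * (A1 + A3) + (0 : ℤ) * (A1 - A3) + -A2 = x0 + -A2 by ring]
        exact hB0
      · rw [show x0 + (0 : ℤ) * (A1 + A3) + (0 : ℤ) * (A1 - A3) + A1 = x0 + A1 by ring]
        simp
    intro k
    induction k using Int.induction_on with
    | zero =>
      intro l
      induction l using Int.induction_on with
      | zero => exact base
      | succ i ih => exact stepl 0 i ih
      | pred i ih => exact stepl' 0 (-(i : ℤ)) ih
    | succ i ih =>
      intro l
      exact stepk (i : ℤ) l (ih l)
    | pred i ih =>
      intro l
      exact stepk' (-(i : ℤ)) l (ih l)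
  have hzero : (b - a) * (A1 + A3) + (a + b + 1) * (A1 - A3) = 0 := by
    rw [hA1, hA3, ha, hb]; ring
  have h0 := (key (b - a) (a + b + 1)).2
  rw [show x0 + (b - a) * (A1 + A3) + (a + b + 1) * (A1 - A3) + A1 = x0 + A1 by
    linear_combination hzero] at h0
  have hodd : ¬ Even ((b - a) + (a + b + 1)) := by
    rw [Int.even_iff]; omega
  exact hodd (h0.mp rfl)

private lemma symmDiff_auto {d : ℕ} (X : Finset (Fin d)) :
    IsCubeAutomorphism (fun A : Finset (Fin d) => symmDiff A X) := by
  constructor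
  · exact Function.Involutive.bijective (fun A => by
      simp only [symmDiff_assoc, symmDiff_self, symmDiff_bot])
  · intro A B
    have h : symmDiff (symmDiff A X) (symmDiff B X) = symmDiff A B := by
      rw [symmDiff_comm B X, symmDiff_assoc, symmDiff_symmDiff_cancel_left]
    simp only [h]

private lemma card_symmDiff_subset {α : Type*} [DecidableEq α] {B X : Finset α}
    (h : B ⊆ X) : ((symmDiff B X).card : ℤ) = (X.card : ℤ) - B.card := by
  rw [symmDiff_of_le h, Finset.card_sdiff_of_subset h]
  have := Finset.card_le_card h
  omega

private lemma card_symmDiff_disjoint {α : Type*} [DecidableEq α] {B X : Finset α}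
    (h : Disjoint B X) : ((symmDiff B X).card : ℤ) = (X.card : ℤ) + B.card := by
  rw [h.symmDiff_eq_sup, Finset.sup_eq_union, Finset.card_union_of_disjoint h]
  push_cast
  ring

private lemma weight_formula {α : Type*} [DecidableEq α] {K B X : Finset α} {a : ℕ}
    (e : Bool) (hB : B ⊆ K) (hBc : B.card = a)
    (hpos : cond e (Disjoint K X) (K ⊆ X)) :
    ((symmDiff B X).card : ℤ) = (X.card : ℤ) + cond e (a : ℤ) (-(a : ℤ)) := by
  cases e with
  | true =>
    simp only [cond_true] at hpos ⊢
    rw [card_symmDiff_disjoint (hpos.mono_left hB), hBc]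
  | false =>
    simp only [cond_false] at hpos ⊢
    rw [card_symmDiff_subset (hB.trans hpos), hBc]
    ring

private lemma exists_minimal_subset (M : Set (Set ℤ)) :
    ∀ (n : ℕ) (D0 : Set ℤ), D0 ∈ M → D0.Finite → D0.ncard ≤ n →
      ∃ D1 ∈ M, D1 ⊆ D0 ∧ ∀ D2 ∈ M, D2 ⊆ D1 → D2 = D1 := by
  intro n
  induction n with
  | zero =>
    intro D0 hD0 hfin hc
    refine ⟨D0, hD0, subset_rfl, ?_⟩
    intro D2 _ hsub
    have hD0e : D0 = ∅ := (Set.ncard_eq_zero hfin).mp (Nat.le_zero.mp hc)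
    rw [hD0e] at hsub ⊢
    exact Set.subset_empty_iff.mp hsub
  | succ n ih =>
    intro D0 hD0 hfin hc
    by_cases hmin : ∀ D2 ∈ M, D2 ⊆ D0 → D2 = D0
    · exact ⟨D0, hD0, subset_rfl, hmin⟩
    · push_neg at hmin
      obtain ⟨D2, hD2M, hsub, hne⟩ := hmin
      have hss : D2 ⊂ D0 := ⟨hsub, fun h => hne (subset_antisymm hsub h)⟩
      have hlt : D2.ncard < D0.ncard := Set.ncard_lt_ncard hss hfin
      obtain ⟨D1, h1, h2, h3⟩ := ih D2 hD2M (hfin.subset hsub) (by omega)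
      exact ⟨D1, h1, h2.trans hsub, h3⟩

private lemma avoid_of_hc {d a1 a2 a3 t1 t2 t3 : ℕ} {K1 K2 K3 : Finset (Fin d)}
    (hK1 : K1.card = a1 + t1) (hK2 : K2.card = a2 + t2) (hK3 : K3.card = a3 + t3)
    (hd12 : Disjoint K1 K2) (hd13 : Disjoint K1 K3) (hd23 : Disjoint K2 K3)
    {S : Set (Finset (Fin d))}
    (hS : S = ↑(K1.powersetCard a1) ∪ ↑(K2.powersetCard a2) ∪ ↑(K3.powersetCard a3))
    {c : ℤ → Fin 2}
    (hc : ¬ ∃ D ∈ WPrime S, ∃ j : ℤ, ∀ x ∈ D, ∀ y ∈ D, c (x + j) = c (y + j)) :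
    ∀ (j : ℤ) (e1 e2 e3 : Bool),
      ¬ (c (j + cond e1 (a1 : ℤ) (-(a1 : ℤ))) = c (j + cond e2 (a2 : ℤ) (-(a2 : ℤ))) ∧
         c (j + cond e2 (a2 : ℤ) (-(a2 : ℤ))) = c (j + cond e3 (a3 : ℤ) (-(a3 : ℤ)))) := by
  intro j e1 e2 e3 hmono
  apply hc
  set X : Finset (Fin d) := (cond e1 ∅ K1) ∪ ((cond e2 ∅ K2) ∪ (cond e3 ∅ K3)) with hXdef
  have dK12 : Disjoint K1 (cond e2 ∅ K2) := by cases e2 <;> simp [hd12]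
  have dK13 : Disjoint K1 (cond e3 ∅ K3) := by cases e3 <;> simp [hd13]
  have dK21 : Disjoint K2 (cond e1 ∅ K1) := by cases e1 <;> simp [hd12.symm]
  have dK23 : Disjoint K2 (cond e3 ∅ K3) := by cases e3 <;> simp [hd23]
  have dK31 : Disjoint K3 (cond e1 ∅ K1) := by cases e1 <;> simp [hd13.symm]
  have dK32 : Disjoint K3 (cond e2 ∅ K2) := by cases e2 <;> simp [hd23.symm]
  have hp1 : cond e1 (Disjoint K1 X) (K1 ⊆ X) := by
    cases e1 with
    | false =>
      simp only [cond_false]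
      rw [hXdef]
      simp only [cond_false]
      exact Finset.subset_union_left
    | true =>
      simp only [cond_true]
      rw [hXdef]
      simp only [cond_true]
      exact Finset.disjoint_union_right.mpr
        ⟨Finset.disjoint_empty_right _, Finset.disjoint_union_right.mpr ⟨dK12, dK13⟩⟩
  have hp2 : cond e2 (Disjoint K2 X) (K2 ⊆ X) := by
    cases e2 with
    | false =>
      simp only [cond_false]
      rw [hXdef]
      simp only [cond_false]
      exact Finset.subset_union_left.trans Finset.subset_union_right
    | true =>
      simp only [cond_true]
      rw [hXdef]
      simp only [cond_true]
      exact Finset.disjoint_union_right.mpr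
        ⟨dK21, Finset.disjoint_union_right.mpr ⟨Finset.disjoint_empty_right _, dK23⟩⟩
  have hp3 : cond e3 (Disjoint K3 X) (K3 ⊆ X) := by
    cases e3 with
    | false =>
      simp only [cond_false]
      rw [hXdef]
      simp only [cond_false]
      exact Finset.subset_union_right.trans Finset.subset_union_right
    | true =>
      simp only [cond_true]
      rw [hXdef]
      simp only [cond_true]
      exact Finset.disjoint_union_right.mpr
        ⟨dK31, Finset.disjoint_union_right.mpr ⟨dK32, Finset.disjoint_empty_right _⟩⟩
  -- the three weights
  set n1 : ℤ := (X.card : ℤ) + cond e1 (a1 : ℤ) (-(a1 : ℤ)) with hn1def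
  set n2 : ℤ := (X.card : ℤ) + cond e2 (a2 : ℤ) (-(a2 : ℤ)) with hn2def
  set n3 : ℤ := (X.card : ℤ) + cond e3 (a3 : ℤ) (-(a3 : ℤ)) with hn3def
  set W : Set ℤ := weightSet ((fun A : Finset (Fin d) => symmDiff A X) '' S) with hWdef
  have hWsub : ∀ w ∈ W, w = n1 ∨ w = n2 ∨ w = n3 := by
    rintro w ⟨A, ⟨B, hBS, rfl⟩, rfl⟩
    rw [hS] at hBS
    rcases hBS with (hB | hB) | hB
    · obtain ⟨hsub, hcard⟩ := Finset.mem_powersetCard.mp hB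
      exact Or.inl (weight_formula e1 hsub hcard hp1)
    · obtain ⟨hsub, hcard⟩ := Finset.mem_powersetCard.mp hB
      exact Or.inr (Or.inl (weight_formula e2 hsub hcard hp2))
    · obtain ⟨hsub, hcard⟩ := Finset.mem_powersetCard.mp hB
      exact Or.inr (Or.inr (weight_formula e3 hsub hcard hp3))
  have hr1 : n1 ∈ W := by
    obtain ⟨B, hB⟩ := Finset.powersetCard_nonempty.mpr (by omega : a1 ≤ K1.card)
    obtain ⟨hsub, hcard⟩ := Finset.mem_powersetCard.mp hB
    exact ⟨symmDiff B X, ⟨B, by rw [hS]; exact Or.inl (Or.inl hB), rfl⟩,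
      weight_formula e1 hsub hcard hp1⟩
  have hr2 : n2 ∈ W := by
    obtain ⟨B, hB⟩ := Finset.powersetCard_nonempty.mpr (by omega : a2 ≤ K2.card)
    obtain ⟨hsub, hcard⟩ := Finset.mem_powersetCard.mp hB
    exact ⟨symmDiff B X, ⟨B, by rw [hS]; exact Or.inl (Or.inr hB), rfl⟩,
      weight_formula e2 hsub hcard hp2⟩
  have hr3 : n3 ∈ W := by
    obtain ⟨B, hB⟩ := Finset.powersetCard_nonempty.mpr (by omega : a3 ≤ K3.card)
    obtain ⟨hsub, hcard⟩ := Finset.mem_powersetCard.mp hB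
    exact ⟨symmDiff B X, ⟨B, by rw [hS]; exact Or.inr hB, rfl⟩,
      weight_formula e3 hsub hcard hp3⟩
  have hWeq : W = {n1, n2, n3} := by
    apply Set.Subset.antisymm
    · intro w hw
      rcases hWsub w hw with rfl | rfl | rfl
      · exact Set.mem_insert _ _
      · exact Set.mem_insert_of_mem _ (Set.mem_insert _ _)
      · exact Set.mem_insert_of_mem _ (Set.mem_insert_of_mem _ rfl)
    · rintro w (rfl | rfl | rfl)
      · exact hr1
      · exact hr2
      · exact hr3
  set μ : ℤ := min n1 (min n2 n3) with hμdef
  have hμ1 : μ ≤ n1 := min_le_left _ _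
  have hμ2 : μ ≤ n2 := le_trans (min_le_right _ _) (min_le_left _ _)
  have hμ3 : μ ≤ n3 := le_trans (min_le_right _ _) (min_le_right _ _)
  have hμW : μ ∈ W := by
    rcases min_choice n1 (min n2 n3) with h | h
    · rw [hμdef, h]; exact hr1
    · rcases min_choice n2 n3 with h' | h'
      · rw [hμdef, h, h']; exact hr2
      · rw [hμdef, h, h']; exact hr3
  set D0 : Set ℤ := (fun v => v + -μ) '' W with hD0def
  have hD0mem : D0 ∈ MinZeroTranslates (WStar S) := by
    refine ⟨⟨W, ⟨(fun A : Finset (Fin d) => symmDiff A X), symmDiff_auto X, hWdef⟩,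
      ⟨-μ, hD0def⟩⟩, ⟨μ, hμW, by ring⟩, ?_⟩
    rintro x ⟨w, hw, rfl⟩
    rcases hWsub w hw with rfl | rfl | rfl
    · show (0 : ℤ) ≤ n1 + -μ
      linarith
    · show (0 : ℤ) ≤ n2 + -μ
      linarith
    · show (0 : ℤ) ≤ n3 + -μ
      linarith
  have hD0fin : D0.Finite := by
    rw [hD0def, hWeq]
    exact (Set.toFinite _).image _
  obtain ⟨D1, hD1M, hD1sub, hD1min⟩ :=
    exists_minimal_subset (MinZeroTranslates (WStar S)) D0.ncard D0 hD0mem hD0fin le_rfl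
  refine ⟨D1, ⟨hD1M, hD1min⟩, j + μ - (X.card : ℤ), ?_⟩
  -- all elements of D1 get the same color
  have hval : ∀ u ∈ D1, c (u + (j + μ - (X.card : ℤ))) = c (j + cond e2 (a2 : ℤ) (-(a2 : ℤ))) := by
    intro u hu
    obtain ⟨w, hw, rfl⟩ := hD1sub hu
    rcases hWsub w hw with rfl | rfl | rfl
    · rw [hn1def, show (X.card : ℤ) + cond e1 (a1 : ℤ) (-(a1 : ℤ)) + -μ + (j + μ - (X.card : ℤ))
          = j + cond e1 (a1 : ℤ) (-(a1 : ℤ)) by ring]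
      exact hmono.1
    · rw [hn2def, show (X.card : ℤ) + cond e2 (a2 : ℤ) (-(a2 : ℤ)) + -μ + (j + μ - (X.card : ℤ))
          = j + cond e2 (a2 : ℤ) (-(a2 : ℤ)) by ring]
    · rw [hn3def, show (X.card : ℤ) + cond e3 (a3 : ℤ) (-(a3 : ℤ)) + -μ + (j + μ - (X.card : ℤ))
          = j + cond e3 (a3 : ℤ) (-(a3 : ℤ)) by ring]
      exact hmono.2.symm
  intro x hx y hy
  rw [hval x hx, hval y hy]
theorem three_cliques_periodic_two_a2 (d a1 a2 a3 t1 t2 t3 : ℕ)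
    (hgt1 : a2 < a1) (hgt2 : a3 < a2)
    (hval : ∃ p q r : ℕ, Odd p ∧ Odd q ∧ a1 = p * 2 ^ r ∧ a3 = q * 2 ^ r)
    (K1 K2 K3 : Finset (Fin d))
    (hK1 : K1.card = a1 + t1) (hK2 : K2.card = a2 + t2) (hK3 : K3.card = a3 + t3)
    (hd12 : Disjoint K1 K2) (hd13 : Disjoint K1 K3) (hd23 : Disjoint K2 K3)
    (S : Set (Finset (Fin d)))
    (hS : S = ↑(K1.powersetCard a1) ∪ ↑(K2.powersetCard a2) ∪ ↑(K3.powersetCard a3))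
    (c : ℤ → Fin 2)
    (hc : ¬ ∃ D ∈ WPrime S, ∃ j : ℤ, ∀ x ∈ D, ∀ y ∈ D, c (x + j) = c (y + j)) :
    ∀ x : ℤ, c (x + 2 * (a2 : ℤ)) = c x := by
  obtain ⟨p, q, r, hp, hq, ha1, ha3⟩ := hval
  have hAv := avoid_of_hc hK1 hK2 hK3 hd12 hd13 hd23 hS hc
  have hC : PairCond (a1 : ℤ) (a2 : ℤ) (a3 : ℤ) c := by
    intro z
    exact fin2_pairs _ _ _ _ _ _ (hAv z true true true) (hAv z true true false)
      (hAv z true false true) (hAv z true false false) (hAv z false true true)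
      (hAv z false true false) (hAv z false false true) (hAv z false false false)
  obtain ⟨mp, hmp⟩ := hp
  obtain ⟨mq, hmq⟩ := hq
  exact core_periodic (a1 : ℤ) (a2 : ℤ) (a3 : ℤ) (p : ℤ) (q : ℤ) ((2 : ℤ) ^ r)
    ⟨(mp : ℤ), by exact_mod_cast hmp⟩ ⟨(mq : ℤ), by exact_mod_cast hmq⟩
    (by exact_mod_cast ha1) (by exact_mod_cast ha3) c hC
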